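/- Let G = (V, E) be a finite directed graph, Eᵢ ⊆ E, Gᵢ = (V, E ∪ Rᵢ) its projection, and Ēᵢ the set of edges with endpoints in distinct strongly connected components of Gᵢ. Then the component connectivity graph implied by removing Ēᵢ — the graph whose vertices are the weakly connected components of (V, E \ Ēᵢ), with an edge (C, D) for C ≠ D whenever some edge of Ēᵢ goes from C to D — is a directed acyclic graph. -/

import Mathlib

/-- Two vertices lie in the same strongly connected component: mutual reachability. -/
def SameSCC {V : Type*} (E : V → V → Prop) (u v : V) : Prop :=
  Relation.ReflTransGen E u v ∧ Relation.ReflTransGen E v u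

/-- The projection of `G = (V, E)` along a direction: keep all edges of `E` and add
the reverses `Rᵢ` of all edges not in the distinguished subset `Eᵢ`. -/
def Projection {V : Type*} (E Ei : V → V → Prop) (u v : V) : Prop :=
  E u v ∨ (E v u ∧ ¬ Ei v u)

/-- `Ēᵢ`: the edges of `E` whose endpoints lie in distinct strongly connected
components of the projection `Gᵢ`. -/
def EbarOf {V : Type*} (E Ei : V → V → Prop) (u v : V) : Prop :=
  E u v ∧ ¬ SameSCC (Projection E Ei) u v

/-- The setoid of weak connectivity for an edge relation `F`: its classes are the
weakly connected components of `(V, F)`. -/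
def wccSetoid {V : Type*} (F : V → V → Prop) : Setoid V where
  r := Relation.ReflTransGen (fun a b => F a b ∨ F b a)
  iseqv := ⟨fun _ => .refl,
    fun h => (@Relation.ReflTransGen.stdSymm _ _ ⟨fun _ _ hab => hab.symm⟩).symm _ _ h,
    fun h1 h2 => h1.trans h2⟩

/-- The component connectivity graph (CCG) implied by removing `Ē ⊆ E`: vertices are
the weakly connected components of `(V, E \ Ē)`, with an edge `(C, D)`, `C ≠ D`,
whenever some edge of `Ē` goes from a vertex of `C` to a vertex of `D`. -/
def CCGEdge {V : Type*} (E Ebar : V → V → Prop)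
    (C D : Quotient (wccSetoid (fun a b => E a b ∧ ¬ Ebar a b))) : Prop :=
  C ≠ D ∧ ∃ u v : V, Quotient.mk _ u = C ∧ Quotient.mk _ v = D ∧ Ebar u v

section Aux

variable {V : Type*} (E Ei : V → V → Prop)

lemma sameSCC_refl (u : V) : SameSCC (Projection E Ei) u u := ⟨.refl, .refl⟩

lemma sameSCC_symm {u v : V} (h : SameSCC (Projection E Ei) u v) :
    SameSCC (Projection E Ei) v u := ⟨h.2, h.1⟩

lemma sameSCC_trans {u v w : V} (h1 : SameSCC (Projection E Ei) u v)
    (h2 : SameSCC (Projection E Ei) v w) : SameSCC (Projection E Ei) u w :=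
  ⟨h1.1.trans h2.1, h2.2.trans h1.2⟩

/-- Weak connectivity in `E \ Ēᵢ` implies same SCC in the projection. -/
lemma wcc_sameSCC {u v : V}
    (h : (wccSetoid (fun a b => E a b ∧ ¬ EbarOf E Ei a b)).r u v) :
    SameSCC (Projection E Ei) u v := by
  induction h with
  | refl => exact sameSCC_refl E Ei u
  | tail _ hstep ih =>
    rename_i b c _
    refine sameSCC_trans E Ei ih ?_
    rcases hstep with ⟨hE, hnb⟩ | ⟨hE, hnb⟩
    · by_contra hns
      exact hnb ⟨hE, hns⟩
    · refine sameSCC_symm E Ei ?_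
      by_contra hns
      exact hnb ⟨hE, hns⟩

/-- Reachability in the projection descends along CCG paths. -/
lemma ccg_path_reach {C D : Quotient (wccSetoid (fun a b => E a b ∧ ¬ EbarOf E Ei a b))}
    (h : Relation.ReflTransGen (CCGEdge E (EbarOf E Ei)) C D) :
    ∀ u v : V, Quotient.mk _ u = C → Quotient.mk _ v = D →
      Relation.ReflTransGen (Projection E Ei) u v := by
  induction h with
  | refl =>
    intro u v hu hv
    exact (wcc_sameSCC E Ei (Quotient.exact (hu.trans hv.symm))).1
  | tail _ hstep ih =>
    rename_i M D' _
    intro u v hu hv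
    obtain ⟨_, a, b, ha, hb, hE, _⟩ := hstep
    have h1 : Relation.ReflTransGen (Projection E Ei) u a := ih u a hu ha
    have h2 : Relation.ReflTransGen (Projection E Ei) b v :=
      (wcc_sameSCC E Ei (Quotient.exact (hb.trans hv.symm))).1
    exact (h1.tail (Or.inl hE)).trans h2

end Aux

/-- The component connectivity graph implied by removing `Ēᵢ` (the edges with
endpoints in distinct strongly connected components of the projection `Gᵢ`)
is a directed acyclic graph. -/
theorem ccg_of_ebar_acyclic {V : Type*} [Fintype V]
    (E Ei : V → V → Prop) (hsub : ∀ u v, Ei u v → E u v) :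
    ¬ ∃ C, Relation.TransGen (CCGEdge E (EbarOf E Ei)) C C := by
  rintro ⟨C, hcyc⟩
  obtain ⟨D, hCD, hDC⟩ := Relation.TransGen.head'_iff.mp hcyc
  obtain ⟨_, u, v, hu, hv, hE, hns⟩ := hCD
  have hback : Relation.ReflTransGen (Projection E Ei) v u :=
    ccg_path_reach E Ei hDC v u hv hu
  exact hns ⟨Relation.ReflTransGen.single (Or.inl hE), hback⟩
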